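/- Let W be a real m×n matrix and suppose r ∈ ℝ^n satisfies W r ≥ 0 componentwise. Then there exists c > 0 and z ∈ ℝ^m with z ≥ 0, W(c•r) + z ≥ 1, z ≥ 0 componentwise, and ∑ᵢ zᵢ = m - |{i : (W r)ᵢ > 0}|. In particular, the optimal value of the LP min ∑ zᵢ subject to (W r' + z ≥ 1, W r' ≥ 0, z ≥ 0) equals m - max_{r' : W r' ≥ 0} |{i : (W r')ᵢ > 0}|. -/
import Mathlib

lemma slack_main {m n : ℕ} (W : Matrix (Fin m) (Fin n) ℝ)
    (r : Fin n → ℝ) (hr : ∀ i, 0 ≤ W.mulVec r i) :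
    ∃ c : ℝ, 0 < c ∧ ∃ z : Fin m → ℝ, (∀ i, 0 ≤ z i) ∧
      (∀ i, 1 ≤ W.mulVec (c • r) i + z i) ∧
      ∑ i, z i = (m : ℝ) - (Finset.univ.filter fun i => 0 < W.mulVec r i).card := by
  classical
  set S := Finset.univ.filter fun i => 0 < W.mulVec r i with hS
  refine ⟨1 + ∑ i ∈ S, (W.mulVec r i)⁻¹, ?_, fun i => if 0 < W.mulVec r i then 0 else 1,
    ?_, ?_, ?_⟩
  · have : 0 ≤ ∑ i ∈ S, (W.mulVec r i)⁻¹ :=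
      Finset.sum_nonneg fun i _ => inv_nonneg.2 (hr i)
    linarith
  · intro i; dsimp only; split <;> norm_num
  · intro i
    rw [Matrix.mulVec_smul]
    dsimp only
    by_cases h : 0 < W.mulVec r i
    · simp only [h, if_true, add_zero, smul_eq_mul, Pi.smul_apply]
      have hc : (W.mulVec r i)⁻¹ ≤ 1 + ∑ j ∈ S, (W.mulVec r j)⁻¹ := by
        have h1 : (W.mulVec r i)⁻¹ ≤ ∑ j ∈ S, (W.mulVec r j)⁻¹ :=
          Finset.single_le_sum (f := fun j => (W.mulVec r j)⁻¹)
            (fun j _ => inv_nonneg.2 (hr j)) (by simp [hS, h])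
        linarith
      calc (1:ℝ) = (W.mulVec r i)⁻¹ * W.mulVec r i := (inv_mul_cancel₀ h.ne').symm
        _ ≤ (1 + ∑ j ∈ S, (W.mulVec r j)⁻¹) * W.mulVec r i :=
            mul_le_mul_of_nonneg_right hc (hr i)
    · have h0 : W.mulVec r i = 0 := le_antisymm (not_lt.1 h) (hr i)
      simp [h, h0]
  · dsimp only
    have hconv : (∑ i, if 0 < W.mulVec r i then (0:ℝ) else 1) =
        ((Finset.univ.filter fun i => ¬ 0 < W.mulVec r i).card : ℝ) := by
      rw [Finset.sum_ite, Finset.sum_const, Finset.sum_const]; simp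
    rw [hconv]
    have hcard : S.card + (Finset.univ.filter fun i => ¬ 0 < W.mulVec r i).card = m := by
      rw [hS, Finset.card_filter_add_card_filter_not, Finset.card_univ, Fintype.card_fin]
    have := congrArg (fun k : ℕ => (k:ℝ)) hcard
    push_cast at this; linarith

theorem slack_lp_value {m n : ℕ} (W : Matrix (Fin m) (Fin n) ℝ)
    (rstar : Fin n → ℝ) (hstar : ∀ i, 0 ≤ W.mulVec rstar i)
    (hmax : ∀ r' : Fin n → ℝ, (∀ i, 0 ≤ W.mulVec r' i) →
      (Finset.univ.filter fun i => 0 < W.mulVec r' i).card ≤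
        (Finset.univ.filter fun i => 0 < W.mulVec rstar i).card) :
    (∀ r : Fin n → ℝ, (∀ i, 0 ≤ W.mulVec r i) →
      ∃ c : ℝ, 0 < c ∧ ∃ z : Fin m → ℝ, (∀ i, 0 ≤ z i) ∧
        (∀ i, 1 ≤ W.mulVec (c • r) i + z i) ∧
        ∑ i, z i = (m : ℝ) - (Finset.univ.filter fun i => 0 < W.mulVec r i).card) ∧
    sInf {v : ℝ | ∃ (r' : Fin n → ℝ) (z : Fin m → ℝ),
        (∀ i, 1 ≤ W.mulVec r' i + z i) ∧ (∀ i, 0 ≤ W.mulVec r' i) ∧ (∀ i, 0 ≤ z i) ∧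
        v = ∑ i, z i} =
      (m : ℝ) - (Finset.univ.filter fun i => 0 < W.mulVec rstar i).card := by
  classical
  refine ⟨fun r hr => slack_main W r hr, ?_⟩
  obtain ⟨c, hc, z, hz0, hz1, hzsum⟩ := slack_main W rstar hstar
  have hmem : (m : ℝ) - (Finset.univ.filter fun i => 0 < W.mulVec rstar i).card ∈
      {v : ℝ | ∃ (r' : Fin n → ℝ) (z : Fin m → ℝ),
        (∀ i, 1 ≤ W.mulVec r' i + z i) ∧ (∀ i, 0 ≤ W.mulVec r' i) ∧ (∀ i, 0 ≤ z i) ∧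
        v = ∑ i, z i} := by
    refine ⟨c • rstar, z, hz1, ?_, hz0, hzsum.symm⟩
    intro i
    rw [Matrix.mulVec_smul]
    exact smul_nonneg hc.le (hstar i)
  have hlb : ∀ v ∈ {v : ℝ | ∃ (r' : Fin n → ℝ) (z : Fin m → ℝ),
      (∀ i, 1 ≤ W.mulVec r' i + z i) ∧ (∀ i, 0 ≤ W.mulVec r' i) ∧ (∀ i, 0 ≤ z i) ∧
      v = ∑ i, z i},
      (m : ℝ) - (Finset.univ.filter fun i => 0 < W.mulVec rstar i).card ≤ v := by
    rintro v ⟨r', z', h1, h2, h3, rfl⟩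
    set T := Finset.univ.filter fun i => 0 < W.mulVec r' i with hT
    have hsum : ∑ i, z' i ≥ ∑ i ∈ Finset.univ.filter (fun i => ¬ 0 < W.mulVec r' i), z' i :=
      Finset.sum_le_sum_of_subset_of_nonneg (Finset.filter_subset _ _) (fun i _ _ => h3 i)
    have hge1 : ∀ i ∈ Finset.univ.filter (fun i => ¬ 0 < W.mulVec r' i), (1:ℝ) ≤ z' i := by
      intro i hi
      simp only [Finset.mem_filter] at hi
      have h0 : W.mulVec r' i = 0 := le_antisymm (not_lt.1 hi.2) (h2 i)
      have h4 := h1 i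
      rw [h0] at h4; linarith
    have hsum2 : ((Finset.univ.filter (fun i => ¬ 0 < W.mulVec r' i)).card : ℝ) ≤
        ∑ i ∈ Finset.univ.filter (fun i => ¬ 0 < W.mulVec r' i), z' i := by
      calc ((Finset.univ.filter (fun i => ¬ 0 < W.mulVec r' i)).card : ℝ)
          = ∑ _i ∈ Finset.univ.filter (fun i => ¬ 0 < W.mulVec r' i), (1:ℝ) := by
            rw [Finset.sum_const, nsmul_eq_mul, mul_one]
        _ ≤ _ := Finset.sum_le_sum hge1
    have hcard : T.card + (Finset.univ.filter fun i => ¬ 0 < W.mulVec r' i).card = m := by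
      rw [hT, Finset.card_filter_add_card_filter_not, Finset.card_univ, Fintype.card_fin]
    have hTle := hmax r' h2
    have : ((Finset.univ.filter fun i => ¬ 0 < W.mulVec r' i).card : ℝ) = m - T.card := by
      have := congrArg (fun k : ℕ => (k:ℝ)) hcard
      push_cast at this; linarith
    have hTle' : (T.card : ℝ) ≤ (Finset.univ.filter fun i => 0 < W.mulVec rstar i).card := by
      exact_mod_cast hTle
    linarith
  exact le_antisymm (csInf_le ⟨_, fun v hv => hlb v hv⟩ hmem) (le_csInf ⟨_, hmem⟩ hlb)
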